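/- Fixed points of the nested-logit mapping give share matching: in the random coefficient nested logit model with nest parameter ρ ∈ [0,1), define Φ_j^{δ,γ}(δ) = δ_j + (1−ρ)(log S_j − log s_j(δ)) + γρ(log S_g − log s_g(δ)) − γ(log S_0 − log s_0(δ)) for j in nest g. If γ ≥ 0 and δ = Φ^{δ,γ}(δ), then s_j(δ) = S_j for all products j. -/

import Mathlib

open Real Finset

theorem stmt17 {I J G : Type*} [Fintype I] [Fintype J] [Fintype G]
    [Nonempty I] [Nonempty J] [DecidableEq G]
    (nest : J → G) (hnest : ∀ g, ∃ j, nest j = g)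
    (ρ : ℝ) (hρ : ρ ∈ Set.Ico (0:ℝ) 1)
    (w : I → ℝ) (hw : ∀ i, 0 < w i) (hwsum : ∑ i, w i = 1)
    (μ : I → J → ℝ) (S : J → ℝ) (hS : ∀ j, 0 < S j)
    (S0 : ℝ) (hS0 : 0 < S0) (hsum : S0 + ∑ j, S j = 1)
    (γ : ℝ) (hγ : 0 ≤ γ)
    (IV : (J → ℝ) → I → G → ℝ)
    (hIV : ∀ δ i g, IV δ i g = (1 - ρ) *
      Real.log (∑ j ∈ Finset.univ.filter (fun j => nest j = g),
        Real.exp ((δ j + μ i j) / (1 - ρ))))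
    (si : (J → ℝ) → I → J → ℝ)
    (hsi : ∀ δ i j, si δ i j =
      Real.exp ((δ j + μ i j) / (1 - ρ)) / Real.exp (IV δ i (nest j) / (1 - ρ))
        * (Real.exp (IV δ i (nest j)) / (1 + ∑ g, Real.exp (IV δ i g))))
    (s : (J → ℝ) → J → ℝ) (hs : ∀ δ j, s δ j = ∑ i, w i * si δ i j)
    (sg : (J → ℝ) → G → ℝ)
    (hsg : ∀ δ g, sg δ g = ∑ j ∈ Finset.univ.filter (fun j => nest j = g), s δ j)
    (s0 : (J → ℝ) → ℝ) (hs0 : ∀ δ, s0 δ = 1 - ∑ g, sg δ g)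
    (Sg : G → ℝ)
    (hSg : ∀ g, Sg g = ∑ j ∈ Finset.univ.filter (fun j => nest j = g), S j)
    (δ : J → ℝ)
    (hfix : ∀ j, δ j = δ j + (1 - ρ) * (Real.log (S j) - Real.log (s δ j))
        + γ * ρ * (Real.log (Sg (nest j)) - Real.log (sg δ (nest j)))
        - γ * (Real.log S0 - Real.log (s0 δ))) :
    ∀ j, s δ j = S j := by
  obtain ⟨hρ0, hρ1⟩ := hρ
  have h1ρ : (0:ℝ) < 1 - ρ := by linarith
  have hfilne : ∀ g : G, (Finset.univ.filter (fun j => nest j = g)).Nonempty := by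
    intro g; obtain ⟨j, hj⟩ := hnest g
    exact ⟨j, by simp [hj]⟩
  have hsipos : ∀ i j, 0 < si δ i j := by
    intro i j
    rw [hsi]
    have hD : (0:ℝ) < 1 + ∑ g, Real.exp (IV δ i g) := by positivity
    exact mul_pos (div_pos (Real.exp_pos _) (Real.exp_pos _)) (div_pos (Real.exp_pos _) hD)
  have hspos : ∀ j, 0 < s δ j := by
    intro j
    rw [hs]
    exact Finset.sum_pos (fun i _ => mul_pos (hw i) (hsipos i j)) Finset.univ_nonempty
  have hsgpos : ∀ g, 0 < sg δ g := by
    intro g; rw [hsg]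
    exact Finset.sum_pos (fun j _ => hspos j) (hfilne g)
  have hSgpos : ∀ g, 0 < Sg g := by
    intro g; rw [hSg]
    exact Finset.sum_pos (fun j _ => hS j) (hfilne g)
  have hT : ∀ i g, Real.exp (IV δ i g / (1 - ρ)) =
      ∑ j ∈ Finset.univ.filter (fun j => nest j = g), Real.exp ((δ j + μ i j) / (1 - ρ)) := by
    intro i g
    have hpos : (0:ℝ) < ∑ j ∈ Finset.univ.filter (fun j => nest j = g),
        Real.exp ((δ j + μ i j) / (1 - ρ)) :=
      Finset.sum_pos (fun j _ => Real.exp_pos _) (hfilne g)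
    rw [hIV, mul_div_cancel_left₀ _ (ne_of_gt h1ρ)]
    exact Real.exp_log hpos
  have hsum_si : ∀ i g, ∑ j ∈ Finset.univ.filter (fun j => nest j = g), si δ i j =
      Real.exp (IV δ i g) / (1 + ∑ g', Real.exp (IV δ i g')) := by
    intro i g
    have step : ∀ j ∈ Finset.univ.filter (fun j => nest j = g), si δ i j =
        Real.exp ((δ j + μ i j) / (1 - ρ)) / Real.exp (IV δ i g / (1 - ρ))
          * (Real.exp (IV δ i g) / (1 + ∑ g', Real.exp (IV δ i g'))) := by
      intro j hj
      simp only [Finset.mem_filter, Finset.mem_univ, true_and] at hj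
      rw [hsi, hj]
    rw [Finset.sum_congr rfl step, ← Finset.sum_mul, ← Finset.sum_div, ← hT,
      div_self (Real.exp_ne_zero _), one_mul]
  have hfiber : ∀ f : J → ℝ,
      ∑ g, ∑ j ∈ Finset.univ.filter (fun j => nest j = g), f j = ∑ j, f j :=
    fun f => Finset.sum_fiberwise Finset.univ nest f
  have hGne : Nonempty G := ⟨nest (Classical.arbitrary J)⟩
  have hsi_tot : ∀ i, ∑ j, si δ i j =
      (∑ g, Real.exp (IV δ i g)) / (1 + ∑ g, Real.exp (IV δ i g)) := by
    intro i
    rw [← hfiber (si δ i), Finset.sum_congr rfl (fun g _ => hsum_si i g), ← Finset.sum_div]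
  have hstot_lt : ∑ j, s δ j < 1 := by
    have h1 : ∑ j, s δ j = ∑ i, w i * ∑ j, si δ i j := by
      simp only [hs]
      rw [Finset.sum_comm]
      simp [Finset.mul_sum]
    rw [h1, ← hwsum]
    apply Finset.sum_lt_sum_of_nonempty Finset.univ_nonempty
    intro i _
    rw [hsi_tot i]
    have hDpos : (0:ℝ) < ∑ g, Real.exp (IV δ i g) :=
      Finset.sum_pos (fun g _ => Real.exp_pos _) Finset.univ_nonempty
    have : (∑ g, Real.exp (IV δ i g)) / (1 + ∑ g, Real.exp (IV δ i g)) < 1 := by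
      rw [div_lt_one (by linarith)]; linarith
    exact mul_lt_of_lt_one_right (hw i) this
  have hgsum : ∑ g, sg δ g = ∑ j, s δ j := by
    simp only [hsg]; exact hfiber _
  have hSgsum : ∑ g, Sg g = ∑ j, S j := by
    simp only [hSg]; exact hfiber _
  have hstotpos : 0 < ∑ j, s δ j :=
    Finset.sum_pos (fun j _ => hspos j) Finset.univ_nonempty
  have hStotpos : 0 < ∑ j, S j :=
    Finset.sum_pos (fun j _ => hS j) Finset.univ_nonempty
  have hs0pos : 0 < s0 δ := by rw [hs0, hgsum]; linarith
  have hs0lt1 : s0 δ < 1 := by rw [hs0, hgsum]; linarith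
  have hS0lt1 : S0 < 1 := by linarith
  set L : ℝ := Real.log S0 - Real.log (s0 δ) with hLdef
  set A : G → ℝ := fun g =>
    (γ * L - γ * ρ * (Real.log (Sg g) - Real.log (sg δ g))) / (1 - ρ) with hAdef
  have hden : 0 < 1 - ρ + γ * ρ := by nlinarith [mul_nonneg hγ hρ0]
  have hA : ∀ j, S j = s δ j * Real.exp (A (nest j)) := by
    intro j
    have h0 : Real.log (S j) - Real.log (s δ j) = A (nest j) := by
      simp only [hAdef]
      rw [eq_div_iff (ne_of_gt h1ρ)]
      have := hfix j
      linarith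
    calc S j = Real.exp (Real.log (S j)) := (Real.exp_log (hS j)).symm
      _ = Real.exp (Real.log (s δ j) + A (nest j)) := by rw [← h0]; ring_nf
      _ = s δ j * Real.exp (A (nest j)) := by
          rw [Real.exp_add, Real.exp_log (hspos j)]
  have hSgA : ∀ g, Sg g = sg δ g * Real.exp (A g) := by
    intro g
    rw [hSg, hsg, Finset.sum_mul]
    apply Finset.sum_congr rfl
    intro j hj
    simp only [Finset.mem_filter, Finset.mem_univ, true_and] at hj
    rw [← hj] at *
    exact hA j
  have hMA : ∀ g, Real.log (Sg g) - Real.log (sg δ g) = A g := by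
    intro g
    rw [hSgA g, Real.log_mul (ne_of_gt (hsgpos g)) (Real.exp_ne_zero _), Real.log_exp]
    ring
  set c : ℝ := γ / (1 - ρ + γ * ρ) with hcdef
  have hMcL : ∀ g, Real.log (Sg g) - Real.log (sg δ g) = c * L := by
    intro g
    have h := hMA g
    simp only [hAdef] at h
    rw [eq_div_iff (ne_of_gt h1ρ)] at h
    rw [hcdef, div_mul_eq_mul_div, eq_div_iff (ne_of_gt hden)]
    nlinarith [h]
  have hcnn : 0 ≤ c := div_nonneg hγ (le_of_lt hden)
  have hbig : 1 - S0 = (1 - s0 δ) * Real.exp (c * L) := by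
    have h1 : ∑ g, Sg g = (∑ g, sg δ g) * Real.exp (c * L) := by
      rw [Finset.sum_mul]
      apply Finset.sum_congr rfl
      intro g _
      calc Sg g = Real.exp (Real.log (Sg g)) := (Real.exp_log (hSgpos g)).symm
        _ = Real.exp (Real.log (sg δ g) + c * L) := by
            rw [show Real.log (Sg g) = Real.log (sg δ g) + c * L from by linarith [hMcL g]]
        _ = sg δ g * Real.exp (c * L) := by rw [Real.exp_add, Real.exp_log (hsgpos g)]
    rw [hSgsum, hgsum] at h1
    have h2 : ∑ j, S j = 1 - S0 := by linarith
    have h3 : ∑ j, s δ j = 1 - s0 δ := by rw [hs0, hgsum]; ring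
    rw [h2, h3] at h1
    exact h1
  have hLzero : L = 0 := by
    rcases lt_trichotomy L 0 with h | h | h
    · exfalso
      have hS0s0 : S0 < s0 δ := by
        have : Real.exp (Real.log S0) < Real.exp (Real.log (s0 δ)) :=
          Real.exp_lt_exp.mpr (by simp only [hLdef] at h; linarith)
        rwa [Real.exp_log hS0, Real.exp_log hs0pos] at this
      have hexp : Real.exp (c * L) ≤ 1 := by
        rw [← Real.exp_zero]
        exact Real.exp_le_exp.mpr (mul_nonpos_of_nonneg_of_nonpos hcnn (le_of_lt h))
      have hh : (1 - s0 δ) * Real.exp (c * L) ≤ 1 - s0 δ :=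
        mul_le_of_le_one_right (by linarith) hexp
      linarith
    · exact h
    · exfalso
      have hS0s0 : s0 δ < S0 := by
        have : Real.exp (Real.log (s0 δ)) < Real.exp (Real.log S0) :=
          Real.exp_lt_exp.mpr (by simp only [hLdef] at h; linarith)
        rwa [Real.exp_log hS0, Real.exp_log hs0pos] at this
      have hexp : 1 ≤ Real.exp (c * L) := by
        rw [← Real.exp_zero]
        exact Real.exp_le_exp.mpr (mul_nonneg hcnn (le_of_lt h))
      have hh : 1 - s0 δ ≤ (1 - s0 δ) * Real.exp (c * L) :=
        le_mul_of_one_le_right (by linarith) hexp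
      linarith
  intro j
  have hM0 : Real.log (Sg (nest j)) - Real.log (sg δ (nest j)) = 0 := by
    rw [hMcL (nest j), hLzero, mul_zero]
  have hA0 : A (nest j) = 0 := by rw [← hMA (nest j), hM0]
  have := hA j
  rw [hA0, Real.exp_zero, mul_one] at this
  exact this.symm
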